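/- Let f : {0,...,4M-1} → {0,1} be a strategy whose discontinuity points are constrained so that every upward discontinuity point i satisfies i ≡ 2 (mod 4) and every downward discontinuity point i satisfies i ≡ 0 (mod 4). Then the number of gold sites covered by f equals M + ⌊(seg(f) + f(0) − 1)/2⌋ and the number of mine sites covered by f equals M − ⌊(seg(f) − f(0))/2⌋. -/

import Mathlib

open Finset

/-- Number of segments of a strategy `f` on locations `0, ..., 4*M-1`. -/
def seg (M : ℕ) (f : ℕ → ℕ) : ℕ :=
  ((Finset.range (4*M - 1)).filter (fun i => f i ≠ f (i+1))).card + 1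

/-- Upward discontinuity points of `f`. -/
def udp (M : ℕ) (f : ℕ → ℕ) : Finset ℕ :=
  (Finset.range (4*M - 1)).filter (fun i => f i = 0 ∧ f (i+1) = 1)

/-- Downward discontinuity points of `f`. -/
def ddp (M : ℕ) (f : ℕ → ℕ) : Finset ℕ :=
  (Finset.range (4*M - 1)).filter (fun i => f i = 1 ∧ f (i+1) = 0)

/-- Gold sites covered by `f`: locations `i` with `i % 4 ≤ 1` and `f i = (i+1) % 2`. -/
def goldCov (M : ℕ) (f : ℕ → ℕ) : Finset ℕ :=
  (Finset.range (4*M)).filter (fun i => i % 4 ≤ 1 ∧ f i = (i+1) % 2)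

/-- Mine sites covered by `f`: locations `i` with `i % 4 ≥ 2` and `f i = (i+1) % 2`. -/
def mineCov (M : ℕ) (f : ℕ → ℕ) : Finset ℕ :=
  (Finset.range (4*M)).filter (fun i => 2 ≤ i % 4 ∧ f i = (i+1) % 2)

set_option maxHeartbeats 1000000

lemma card_split (p : ℕ → Prop) [DecidablePred p] {n m : ℕ} (h : n ≤ m) :
    ((Finset.range m).filter p).card
      = ((Finset.range n).filter p).card + ((Finset.Ico n m).filter p).card := by
  have hs : Finset.range m = Finset.range n ∪ Finset.Ico n m := by
    rw [Finset.range_eq_Ico, Finset.range_eq_Ico,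
      Finset.Ico_union_Ico_eq_Ico (Nat.zero_le n) h]
  rw [hs, Finset.filter_union, Finset.card_union_of_disjoint]
  exact Finset.disjoint_filter_filter (Finset.disjoint_left.2
    (fun x hx hx' => by simp at hx hx'; omega))

lemma card_filter_Ico4 (p : ℕ → Prop) [DecidablePred p] (n : ℕ) :
    ((Finset.Ico n (n+4)).filter p).card =
      (if p n then 1 else 0) + ((if p (n+1) then 1 else 0) +
       ((if p (n+2) then 1 else 0) + (if p (n+3) then 1 else 0))) := by
  have h : Finset.Ico n (n+4) = {n, n+1, n+2, n+3} := by
    ext x; simp [Finset.mem_Ico, Finset.mem_insert]; omega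
  rw [Finset.card_filter, h,
    Finset.sum_insert (by simp only [Finset.mem_insert, Finset.mem_singleton]; omega),
    Finset.sum_insert (by simp only [Finset.mem_insert, Finset.mem_singleton]; omega),
    Finset.sum_insert (by simp only [Finset.mem_singleton]; omega),
    Finset.sum_singleton]

lemma card_filter_Ico3 (p : ℕ → Prop) [DecidablePred p] (n : ℕ) :
    ((Finset.Ico n (n+3)).filter p).card =
      (if p n then 1 else 0) + ((if p (n+1) then 1 else 0) +
       (if p (n+2) then 1 else 0)) := by
  have h : Finset.Ico n (n+3) = {n, n+1, n+2} := by
    ext x; simp [Finset.mem_Ico, Finset.mem_insert]; omega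
  rw [Finset.card_filter, h,
    Finset.sum_insert (by simp only [Finset.mem_insert, Finset.mem_singleton]; omega),
    Finset.sum_insert (by simp only [Finset.mem_singleton]; omega),
    Finset.sum_singleton]

lemma parcard (f : ℕ → ℕ) (hf : ∀ i, f i ≤ 1) :
    ∀ n, (((Finset.range n).filter (fun i => f i ≠ f (i+1))).card + f 0 + f n) % 2 = 0 := by
  intro n
  induction n with
  | zero => simp; omega
  | succ n ih =>
    rw [Finset.range_add_one, Finset.filter_insert]
    simp only [ne_eq] at ih ⊢
    by_cases h : f n = f (n+1)
    · simp only [h, ne_eq, not_true_eq_false, if_false]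
      omega
    · rw [if_pos h, Finset.card_insert_of_notMem (by simp)]
      have := hf n; have := hf (n+1)
      omega

lemma aux (f : ℕ → ℕ) (hf : ∀ i, f i ≤ 1) (M : ℕ) (hM : 1 ≤ M) :
    (∀ i ∈ udp M f, i % 4 = 2) → (∀ i ∈ ddp M f, i % 4 = 0) →
    (goldCov M f).card = M + (seg M f + f 0 - 1) / 2 ∧
    (mineCov M f).card + (seg M f - f 0) / 2 = M := by
  have disc : ∀ M, (∀ i ∈ udp M f, i % 4 = 2) → (∀ i ∈ ddp M f, i % 4 = 0) →
      ∀ i, i < 4*M - 1 → f i ≠ f (i+1) →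
      (f i = 0 ∧ f (i+1) = 1 ∧ i % 4 = 2) ∨ (f i = 1 ∧ f (i+1) = 0 ∧ i % 4 = 0) := by
    intro M hu hd i hi hne
    have h1 := hf i; have h2 := hf (i+1)
    have hcase : (f i = 0 ∧ f (i+1) = 1) ∨ (f i = 1 ∧ f (i+1) = 0) := by omega
    rcases hcase with ⟨u,v⟩|⟨u,v⟩
    · exact Or.inl ⟨u, v, hu i (by
        simp only [udp, Finset.mem_filter, Finset.mem_range]; exact ⟨hi, u, v⟩)⟩
    · exact Or.inr ⟨u, v, hd i (by
        simp only [ddp, Finset.mem_filter, Finset.mem_range]; exact ⟨hi, u, v⟩)⟩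
  induction M, hM using Nat.le_induction with
  | base =>
    intro hu hd
    have d := disc 1 hu hd
    have h12 : f 1 = f 2 := by
      by_contra h
      rcases d 1 (by norm_num) h with ⟨_,_,hm2⟩|⟨_,_,hm2⟩ <;> omega
    have h01 : ¬ (f 0 = 0 ∧ f 1 = 1) := by
      rintro ⟨u,v⟩
      rcases d 0 (by norm_num) (by norm_num; omega) with ⟨_,_,hm2⟩|⟨w,_,_⟩ <;> omega
    have h23 : ¬ (f 2 = 1 ∧ f 3 = 0) := by
      rintro ⟨u,v⟩
      rcases d 2 (by norm_num) (by norm_num; omega) with ⟨w,_,_⟩|⟨_,_,hm2⟩ <;> omega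
    have e4 : Finset.range (4*1) = Finset.Ico 0 (0+4) := by
      rw [Finset.range_eq_Ico]
    have e3 : Finset.range (4*1-1) = Finset.Ico 0 (0+3) := by
      rw [Finset.range_eq_Ico]
    rcases (show f 0 = 0 ∨ f 0 = 1 from by have := hf 0; omega) with h0|h0 <;>
    rcases (show f 1 = 0 ∨ f 1 = 1 from by have := hf 1; omega) with h1|h1 <;>
    rcases (show f 3 = 0 ∨ f 3 = 1 from by have := hf 3; omega) with h3|h3 <;>
      first
        | omega
        | (constructor <;>
            (simp only [goldCov, mineCov, seg, e4, e3, card_filter_Ico4, card_filter_Ico3,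
               Nat.zero_add, show (1:ℕ)+1 = 2 from rfl, show (2:ℕ)+1 = 3 from rfl,
               show (3:ℕ)+1 = 4 from rfl, h0, h1, h3, ← h12]
             norm_num))
  | succ M hM ih =>
    intro hu hd
    have huM : ∀ i ∈ udp M f, i % 4 = 2 := by
      intro i hi; apply hu
      simp only [udp, Finset.mem_filter, Finset.mem_range] at hi ⊢
      exact ⟨by omega, hi.2⟩
    have hdM : ∀ i ∈ ddp M f, i % 4 = 0 := by
      intro i hi; apply hd
      simp only [ddp, Finset.mem_filter, Finset.mem_range] at hi ⊢
      exact ⟨by omega, hi.2⟩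
    obtain ⟨ihg, ihm⟩ := ih huM hdM
    have d := disc (M+1) hu hd
    obtain ⟨n, hn⟩ : ∃ n, 4*M = n+1 := ⟨4*M-1, by omega⟩
    have hA : f n = f (n+1) := by
      by_contra h
      rcases d n (by omega) h with ⟨_,_,hm2⟩|⟨_,_,hm2⟩ <;> omega
    have hB : f (n+2) = f (n+3) := by
      by_contra h
      have h2 : f (n+2) ≠ f (n+2+1) := by
        simpa [show n+2+1 = n+3 from by omega] using h
      rcases d (n+2) (by omega) h2 with ⟨_,_,hm2⟩|⟨_,_,hm2⟩ <;> omega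
    have hab : ¬ (f (n+1) = 0 ∧ f (n+2) = 1) := by
      rintro ⟨u,v⟩
      have h2 : f (n+1) ≠ f (n+1+1) := by
        simp only [show n+1+1 = n+2 from by omega]; omega
      rcases d (n+1) (by omega) h2 with ⟨_,_,hm2⟩|⟨w,_,_⟩ <;> omega
    have hbc : ¬ (f (n+3) = 1 ∧ f (n+4) = 0) := by
      rintro ⟨u,v⟩
      have h2 : f (n+3) ≠ f (n+3+1) := by
        simp only [show n+3+1 = n+4 from by omega]; omega
      rcases d (n+3) (by omega) h2 with ⟨w,_,_⟩|⟨_,_,hm2⟩ <;> omega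
    have e1 : 4*(M+1) = (n+1)+4 := by omega
    have gsplit : (goldCov (M+1) f).card = (goldCov M f).card +
        ((Finset.Ico (n+1) (n+1+4)).filter (fun i => i % 4 ≤ 1 ∧ f i = (i+1) % 2)).card := by
      simp only [goldCov, e1, hn]
      exact card_split _ (by omega)
    have msplit : (mineCov (M+1) f).card = (mineCov M f).card +
        ((Finset.Ico (n+1) (n+1+4)).filter (fun i => 2 ≤ i % 4 ∧ f i = (i+1) % 2)).card := by
      simp only [mineCov, e1, hn]
      exact card_split _ (by omega)
    have e2 : 4*(M+1) - 1 = n+4 := by omega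
    have ssplit : seg (M+1) f = ((Finset.range n).filter (fun i => f i ≠ f (i+1))).card +
        ((Finset.Ico n (n+4)).filter (fun i => f i ≠ f (i+1))).card + 1 := by
      simp only [seg, e2]
      rw [card_split _ (show n ≤ n+4 from by omega)]
    have segM : seg M f = ((Finset.range n).filter (fun i => f i ≠ f (i+1))).card + 1 := by
      have e3 : 4*M - 1 = n := by omega
      simp only [seg, e3]
    have par := parcard f hf n
    have hf0 := hf 0
    rcases (show f (n+1) = 0 ∨ f (n+1) = 1 from by have := hf (n+1); omega) with ha|ha <;>
    rcases (show f (n+2) = 0 ∨ f (n+2) = 1 from by have := hf (n+2); omega) with hb|hb <;>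
    rcases (show f (n+4) = 0 ∨ f (n+4) = 1 from by have := hf (n+4); omega) with hc|hc <;>
      (rw [card_filter_Ico4] at gsplit msplit ssplit
       simp only [ne_eq, show n+1+1 = n+2 from by omega, show n+1+2 = n+3 from by omega,
         show n+1+3 = n+4 from by omega, show n+2+1 = n+3 from by omega,
         show n+3+1 = n+4 from by omega, show n+4+1 = n+5 from by omega,
         show (n+1)%4 = 0 from by omega, show (n+2)%4 = 1 from by omega,
         show (n+3)%4 = 2 from by omega, show (n+4)%4 = 3 from by omega,
         show (n+2)%2 = 1 from by omega, show (n+3)%2 = 0 from by omega,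
         show (n+4)%2 = 1 from by omega, show (n+5)%2 = 0 from by omega,
         ha, hb, hc, hA, show f (n+3) = f (n+2) from hB.symm] at gsplit msplit ssplit par segM
       norm_num at gsplit msplit ssplit
       omega)

theorem gold_mine_count (M : ℕ) (hM : 1 ≤ M) (f : ℕ → ℕ) (hf : ∀ i, f i ≤ 1)
    (hudp : ∀ i ∈ udp M f, i % 4 = 2) (hddp : ∀ i ∈ ddp M f, i % 4 = 0) :
    (goldCov M f).card = M + (seg M f + f 0 - 1) / 2 ∧
    (mineCov M f).card = M - (seg M f - f 0) / 2 := by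
  obtain ⟨hg, hm⟩ := aux f hf M hM hudp hddp
  exact ⟨hg, by omega⟩
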